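/- Let F_q be a finite field, E a field extension of F_q of degree m, ρ : E → Mat_{m×m}(F_q) the regular representation (a ↦ matrix of multiplication by a), n₁n₂ = n, and Φ₂ : E^n → (n₁m × n₂m matrices over F_q) the induced two-dimensional expansion. Let 0 < k < n, set t = ⌊(n−k)/2⌋ and assume t ≥ 1, and let C ⊆ E^n have minimum Hamming distance at least n−k+1. Then Φ₂(C) corrects any single one-dimensional burst of length at most m(t−1)+1: for all c, c′ ∈ C and all e, e′ whose supports are each contained either in a single row within m(t−1)+1 contiguous columns or in a single column within m(t−1)+1 contiguous rows, Φ₂(c) + e = Φ₂(c′) + e′ implies c = c′. -/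

import Mathlib

/-- The linear (row-major) index of position `j` in the `i`-th block of length `m`. -/
def finIdx {n m : ℕ} (i : Fin n) (j : Fin m) : Fin (n * m) :=
  ⟨i.1 * m + j.1, by
    have h1 : i.1 + 1 ≤ n := i.2
    have h2 : j.1 < m := j.2
    calc i.1 * m + j.1 < (i.1 + 1) * m := by nlinarith
      _ ≤ n * m := Nat.mul_le_mul_right m h1⟩

/-- A one-dimensional burst of length (at most) `L` in a matrix: the support lies in
a single row within `L` contiguous columns, or in a single column within `L`
contiguous rows. -/
def IsLineBurst {F : Type*} [Zero F] {R C : ℕ} (L : ℕ) (e : Matrix (Fin R) (Fin C) F) : Prop :=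
  (∃ r p : ℕ, ∀ i j, e i j ≠ 0 → (i : ℕ) = r ∧ p ≤ (j : ℕ) ∧ (j : ℕ) < p + L) ∨
  (∃ c p : ℕ, ∀ i j, e i j ≠ 0 → (j : ℕ) = c ∧ p ≤ (i : ℕ) ∧ (i : ℕ) < p + L)

lemma burst_blocks {F : Type*} [Zero F] {R C : ℕ} (m t : ℕ) (hm : 0 < m) (ht1 : 1 ≤ t)
    (e : Matrix (Fin R) (Fin C) F) (h : IsLineBurst (m * (t - 1) + 1) e) :
    ∃ S : Finset (ℕ × ℕ), S.card ≤ t ∧ ∀ i j, e i j ≠ 0 → ((i : ℕ) / m, (j : ℕ) / m) ∈ S := by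
  obtain ⟨r, p, hrp⟩ | ⟨c, p, hcp⟩ := h
  · refine ⟨(Finset.range t).image (fun a => (r / m, p / m + a)), Finset.card_image_le.trans (by simp), ?_⟩
    intro i j hne
    obtain ⟨hi, hp1, hp2⟩ := hrp i j hne
    have h1 : p / m ≤ (j : ℕ) / m := Nat.div_le_div_right hp1
    have hle : (j : ℕ) ≤ p + (t - 1) * m := by
      rw [mul_comm] at hp2; omega
    have h2 : (j : ℕ) / m ≤ p / m + (t - 1) := by
      calc (j : ℕ) / m ≤ (p + (t - 1) * m) / m := Nat.div_le_div_right hle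
        _ = p / m + (t - 1) := Nat.add_mul_div_right p (t - 1) hm
    obtain ⟨a, ha⟩ := Nat.exists_eq_add_of_le h1
    have haa : a < t := by omega
    refine Finset.mem_image.mpr ⟨a, Finset.mem_range.mpr haa, ?_⟩
    rw [hi, ha]
  · refine ⟨(Finset.range t).image (fun a => (p / m + a, c / m)), Finset.card_image_le.trans (by simp), ?_⟩
    intro i j hne
    obtain ⟨hj, hp1, hp2⟩ := hcp i j hne
    have h1 : p / m ≤ (i : ℕ) / m := Nat.div_le_div_right hp1
    have hle : (i : ℕ) ≤ p + (t - 1) * m := by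
      rw [mul_comm] at hp2; omega
    have h2 : (i : ℕ) / m ≤ p / m + (t - 1) := by
      calc (i : ℕ) / m ≤ (p + (t - 1) * m) / m := Nat.div_le_div_right hle
        _ = p / m + (t - 1) := Nat.add_mul_div_right p (t - 1) hm
    obtain ⟨a, ha⟩ := Nat.exists_eq_add_of_le h1
    have haa : a < t := by omega
    refine Finset.mem_image.mpr ⟨a, Finset.mem_range.mpr haa, ?_⟩
    rw [hj, ha]


/-- The two-dimensional expansion via the regular representation
`ρ : E → Mat_{m×m}(F)` of a code `C ⊆ E^n` of minimum distance at least `n - k + 1`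
corrects any single one-dimensional burst of length at most `m(t-1)+1`, where
`t = ⌊(n-k)/2⌋ ≥ 1`. -/
theorem regular_expansion_corrects_single_line_burst
    {F E : Type*} [Field F] [Fintype F] [DecidableEq F]
    [Field E] [Algebra F E] [DecidableEq E]
    (m n n₁ n₂ k t : ℕ) (b : Module.Basis (Fin m) F E)
    (ρ : E → Matrix (Fin m) (Fin m) F)
    (hρ : ρ = fun a => LinearMap.toMatrix b b (LinearMap.mulLeft F a))
    (hn₁ : 0 < n₁) (hn₂ : 0 < n₂) (hn : n₁ * n₂ = n)
    (Φ₂ : (Fin n → E) → Matrix (Fin (n₁ * m)) (Fin (n₂ * m)) F)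
    (hΦ : ∀ (x : Fin n → E) (r : Fin n₁) (c : Fin n₂) (u v : Fin m),
      Φ₂ x (finIdx r u) (finIdx c v) = ρ (x (Fin.cast hn (finIdx r c))) u v)
    (hk : 0 < k) (hkn : k < n) (ht : t = (n - k) / 2) (ht1 : 1 ≤ t)
    (C : Set (Fin n → E))
    (hC : ∀ c ∈ C, ∀ c' ∈ C, c ≠ c' → n - k + 1 ≤ hammingDist c c') :
    ∀ c ∈ C, ∀ c' ∈ C, ∀ e e' : Matrix (Fin (n₁ * m)) (Fin (n₂ * m)) F,
      IsLineBurst (m * (t - 1) + 1) e → IsLineBurst (m * (t - 1) + 1) e' →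
      Φ₂ c + e = Φ₂ c' + e' → c = c' := by
  intro c hc c' hc' e e' he he' heq
  by_contra hne
  obtain ⟨i0⟩ : Nonempty (Fin m) := b.index_nonempty
  have hm : 0 < m := i0.pos
  obtain ⟨S, hScard, hS⟩ := burst_blocks m t hm ht1 e he
  obtain ⟨S', hS'card, hS'⟩ := burst_blocks m t hm ht1 e' he'
  have hdist := hC c hc c' hc' hne
  have hdeq : hammingDist c c' = (Finset.univ.filter fun i => c i ≠ c' i).card := rfl
  have hmaps : ∀ pos ∈ (Finset.univ.filter fun i => c i ≠ c' i),
      (((pos : ℕ) / n₂, (pos : ℕ) % n₂) : ℕ × ℕ) ∈ S ∪ S' := by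
    intro pos hpos
    have hposne : c pos ≠ c' pos := (Finset.mem_filter.mp hpos).2
    have hr : (pos : ℕ) / n₂ < n₁ := by
      apply (Nat.div_lt_iff_lt_mul hn₂).mpr
      rw [hn]; exact pos.2
    have hcb : (pos : ℕ) % n₂ < n₂ := Nat.mod_lt _ hn₂
    set r : Fin n₁ := ⟨(pos : ℕ) / n₂, hr⟩ with hrdef
    set cb : Fin n₂ := ⟨(pos : ℕ) % n₂, hcb⟩ with hcbdef
    have hposeq : Fin.cast hn (finIdx r cb) = pos := by
      apply Fin.ext
      simp only [Fin.coe_cast, finIdx]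
      show (pos : ℕ) / n₂ * n₂ + (pos : ℕ) % n₂ = (pos : ℕ)
      rw [mul_comm]; exact Nat.div_add_mod _ _
    have hexists : ∃ u v : Fin m, ρ (c pos) u v ≠ ρ (c' pos) u v := by
      by_contra hcon
      push_neg at hcon
      have hmat : ρ (c pos) = ρ (c' pos) := by ext u v; exact hcon u v
      rw [hρ] at hmat
      have h2 := (LinearMap.toMatrix b b).injective hmat
      have h3 := LinearMap.congr_fun h2 1
      simp [LinearMap.mulLeft_apply] at h3
      exact hposne h3
    obtain ⟨u, v, huv⟩ := hexists
    have hpt := congrFun (congrFun heq (finIdx r u)) (finIdx cb v)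
    simp only [Matrix.add_apply] at hpt
    have hΦc := hΦ c r cb u v
    have hΦc' := hΦ c' r cb u v
    rw [hposeq] at hΦc hΦc'
    have hene : e (finIdx r u) (finIdx cb v) ≠ e' (finIdx r u) (finIdx cb v) := by
      intro hcontra
      apply huv
      rw [← hΦc, ← hΦc']
      have := hpt
      rw [hcontra] at this
      exact add_right_cancel this
    have hiu : ((finIdx r u : Fin (n₁ * m)) : ℕ) / m = (pos : ℕ) / n₂ := by
      show ((r : ℕ) * m + (u : ℕ)) / m = (pos : ℕ) / n₂
      rw [mul_comm, Nat.mul_add_div hm, Nat.div_eq_of_lt u.2, add_zero]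
    have hjv : ((finIdx cb v : Fin (n₂ * m)) : ℕ) / m = (pos : ℕ) % n₂ := by
      show ((cb : ℕ) * m + (v : ℕ)) / m = (pos : ℕ) % n₂
      rw [mul_comm, Nat.mul_add_div hm, Nat.div_eq_of_lt v.2, add_zero]
    have h0 : e (finIdx r u) (finIdx cb v) ≠ 0 ∨ e' (finIdx r u) (finIdx cb v) ≠ 0 := by
      by_contra hcon
      push_neg at hcon
      exact hene (hcon.1.trans hcon.2.symm)
    rcases h0 with h0 | h0
    · have := hS _ _ h0
      rw [hiu, hjv] at this
      exact Finset.mem_union_left _ this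
    · have := hS' _ _ h0
      rw [hiu, hjv] at this
      exact Finset.mem_union_right _ this
  have hinj : Set.InjOn (fun pos : Fin n => (((pos : ℕ) / n₂, (pos : ℕ) % n₂) : ℕ × ℕ))
      ((Finset.univ.filter fun i => c i ≠ c' i) : Finset (Fin n)) := by
    intro a _ b2 _ hab
    have h1 : (a : ℕ) / n₂ = (b2 : ℕ) / n₂ := congrArg Prod.fst hab
    have h2 : (a : ℕ) % n₂ = (b2 : ℕ) % n₂ := congrArg Prod.snd hab
    apply Fin.ext
    rw [← Nat.div_add_mod (a : ℕ) n₂, ← Nat.div_add_mod (b2 : ℕ) n₂, h1, h2]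
  have hcard := Finset.card_le_card_of_injOn _ hmaps hinj
  have hcard2 : (S ∪ S').card ≤ S.card + S'.card := Finset.card_union_le _ _
  rw [hdeq] at hdist
  omega
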